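/- Let Δ > 0, M₁ > 0, s ∈ ℝ, and let Alg : ℝ → ℝ be any function. Then there exists a continuously differentiable function φ : ℝ → ℝ with |φ'(u)| ≤ M₁ for all u ∈ ℝ such that |Alg(φ(s)) − φ(s−Δ)| ≥ M₁·Δ. -/
import Mathlib

lemma aux_one_point (c s : ℝ) :
    ContDiff ℝ 1 (fun u : ℝ => c * (u - s)) ∧
      ∀ u : ℝ, deriv (fun u : ℝ => c * (u - s)) u = c := by
  constructor
  · exact (contDiff_const.mul (contDiff_id.sub contDiff_const))
  · intro u
    have : HasDerivAt (fun u : ℝ => c * (u - s)) (c * 1) u :=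
      ((hasDerivAt_id u).sub_const s).const_mul c
    simpa using this.deriv

/-- One-point minimax lower bound: for any estimator `Alg` of `φ(s-Δ)` from the single
value `φ(s)`, there is a `C¹` function `φ` with `|φ'| ≤ M₁` everywhere on which the
estimator errs by at least `M₁·Δ`. -/
theorem one_point_lower_bound
    (Δ M₁ s : ℝ) (hΔ : 0 < Δ) (hM₁ : 0 < M₁)
    (Alg : ℝ → ℝ) :
    ∃ φ : ℝ → ℝ, ContDiff ℝ 1 φ ∧ (∀ u : ℝ, |deriv φ u| ≤ M₁) ∧
      M₁ * Δ ≤ |Alg (φ s) - φ (s - Δ)| := by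
  rcases le_or_gt 0 (Alg 0) with h | h
  · refine ⟨fun u => M₁ * (u - s), (aux_one_point M₁ s).1, ?_, ?_⟩
    · intro u
      rw [(aux_one_point M₁ s).2 u, abs_of_pos hM₁]
    · have h1 : (fun u : ℝ => M₁ * (u - s)) s = 0 := by simp
      have h2 : (fun u : ℝ => M₁ * (u - s)) (s - Δ) = -(M₁ * Δ) := by ring_nf
      rw [h1, h2]
      have : 0 < M₁ * Δ := mul_pos hM₁ hΔ
      rw [sub_neg_eq_add, abs_of_pos (by linarith)]
      linarith
  · refine ⟨fun u => -M₁ * (u - s), ((aux_one_point (-M₁) s).1), ?_, ?_⟩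
    · intro u
      rw [(aux_one_point (-M₁) s).2 u, abs_neg, abs_of_pos hM₁]
    · have h1 : (fun u : ℝ => -M₁ * (u - s)) s = 0 := by simp
      have h2 : (fun u : ℝ => -M₁ * (u - s)) (s - Δ) = M₁ * Δ := by ring_nf
      rw [h1, h2]
      have : 0 < M₁ * Δ := mul_pos hM₁ hΔ
      rw [abs_of_neg (by linarith)]
      linarith
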